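/- For α > 0, λ > 0, t > 0: 2/Γ(α)² · ∫₀ᵗ ∫_s^t (t−s)^{α−1}(t−w)^{α−1}(λ s + λ² s w) dw ds = λ t^{2α+1}/((2α+1)Γ(α+1)²) + λ² t^{2α+2}/Γ(α+2)². Consequently, the variance of the fractional integral 𝒩^α(t) of a homogeneous Poisson process with rate λ equals λ t^{2α+1}/((2α+1)Γ(α+1)²). -/

import Mathlib

open MeasureTheory Real intervalIntegral

lemma pow_int_aux (p c : ℝ) (hp : -1 < p) :
    ∫ x in (0:ℝ)..c, x ^ p = c ^ (p+1) / (p+1) := by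
  rw [integral_rpow (Or.inl hp)]
  rw [Real.zero_rpow (by linarith)]
  ring

lemma L_aux (r c A B C : ℝ) (hr : 0 < r) :
    ∫ x in (0:ℝ)..c, (A * x ^ (r-1) + B * x ^ r + C * x ^ (r+1))
      = A * c ^ r / r + B * c ^ (r+1) / (r+1) + C * c ^ (r+2) / (r+2) := by
  have h1 : IntervalIntegrable (fun x : ℝ => A * x ^ (r-1)) volume 0 c :=
    (intervalIntegrable_rpow' (by linarith)).const_mul A
  have h2 : IntervalIntegrable (fun x : ℝ => B * x ^ r) volume 0 c :=
    (intervalIntegrable_rpow' (by linarith)).const_mul B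
  have h3 : IntervalIntegrable (fun x : ℝ => C * x ^ (r+1)) volume 0 c :=
    (intervalIntegrable_rpow' (by linarith)).const_mul C
  rw [integral_add (h1.add h2) h3, integral_add h1 h2,
    intervalIntegral.integral_const_mul, intervalIntegral.integral_const_mul, intervalIntegral.integral_const_mul,
    pow_int_aux _ _ (by linarith : (-1:ℝ) < r - 1),
    pow_int_aux _ _ (by linarith : (-1:ℝ) < r),
    pow_int_aux _ _ (by linarith : (-1:ℝ) < r + 1)]
  rw [sub_add_cancel]
  ring_nf

theorem frac_integral_variance (α lam t : ℝ) (hα : 0 < α) (hlam : 0 < lam) (ht : 0 < t) :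
    (2 / Real.Gamma α ^ 2) *
        ∫ s in (0:ℝ)..t, ∫ w in s..t,
          (t - s) ^ (α - 1) * (t - w) ^ (α - 1) * (lam * s + lam ^ 2 * s * w)
      = lam * t ^ (2 * α + 1) / ((2 * α + 1) * Real.Gamma (α + 1) ^ 2) +
          lam ^ 2 * t ^ (2 * α + 2) / Real.Gamma (α + 2) ^ 2 ∧
    (2 / Real.Gamma α ^ 2) *
        (∫ s in (0:ℝ)..t, ∫ w in s..t,
          (t - s) ^ (α - 1) * (t - w) ^ (α - 1) * (lam * s + lam ^ 2 * s * w)) -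
        (lam * t ^ (α + 1) / Real.Gamma (α + 2)) ^ 2
      = lam * t ^ (2 * α + 1) / ((2 * α + 1) * Real.Gamma (α + 1) ^ 2) := by
  -- step 1: inner integral
  have hinner : ∀ s ∈ Set.uIcc (0:ℝ) t,
      (∫ w in s..t, (t - s) ^ (α - 1) * (t - w) ^ (α - 1) * (lam * s + lam ^ 2 * s * w))
        = (t - s) ^ (α - 1) *
            ((lam * s + lam ^ 2 * s * t) * (t - s) ^ α / α
              + (-(lam ^ 2 * s)) * (t - s) ^ (α + 1) / (α + 1)
              + 0 * (t - s) ^ (α + 2) / (α + 2)) := by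
    intro s hs
    rw [Set.uIcc_of_le ht.le] at hs
    have hst : s ≤ t := hs.2
    rw [show (fun w => (t - s) ^ (α - 1) * (t - w) ^ (α - 1) * (lam * s + lam ^ 2 * s * w))
        = (fun w => (t - s) ^ (α - 1) * ((t - w) ^ (α - 1) * (lam * s + lam ^ 2 * s * w)))
        from by funext w; ring]
    rw [intervalIntegral.integral_const_mul]
    congr 1
    have key : ∀ w ∈ Set.uIcc s t,
        (t - w) ^ (α - 1) * (lam * s + lam ^ 2 * s * w)
          = (fun u : ℝ => (lam * s + lam ^ 2 * s * t) * u ^ (α - 1)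
              + (-(lam ^ 2 * s)) * u ^ α + 0 * u ^ (α + 1)) (t - w) := by
      intro w hw
      rw [Set.uIcc_of_le hst] at hw
      have hu : 0 ≤ t - w := by linarith [hw.2]
      simp only [zero_mul, add_zero]
      rcases eq_or_lt_of_le hu with h0 | h0
      · rw [← h0]
        rw [Real.zero_rpow hα.ne']
        have hwt : w = t := by linarith
        rw [hwt]; ring
      · have : (t - w) ^ α = (t - w) ^ (α - 1) * (t - w) := by
          rw [← Real.rpow_add_one h0.ne' (α - 1)]; ring_nf
        rw [this]; ring
    rw [intervalIntegral.integral_congr key]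
    rw [intervalIntegral.integral_comp_sub_left
      (fun u : ℝ => (lam * s + lam ^ 2 * s * t) * u ^ (α - 1)
        + (-(lam ^ 2 * s)) * u ^ α + 0 * u ^ (α + 1)) t]
    rw [sub_self]
    exact L_aux α (t - s) _ _ _ hα
  -- step 2: outer integral
  have houter :
      (∫ s in (0:ℝ)..t, ∫ w in s..t,
          (t - s) ^ (α - 1) * (t - w) ^ (α - 1) * (lam * s + lam ^ 2 * s * w))
        = (t * (lam + lam ^ 2 * t) / α) * t ^ (2*α) / (2*α)
            + (-((lam + lam ^ 2 * t) / α) - lam ^ 2 * t / (α + 1)) * t ^ (2*α+1) / (2*α+1)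
            + (lam ^ 2 / (α + 1)) * t ^ (2*α+2) / (2*α+2) := by
    rw [intervalIntegral.integral_congr hinner]
    have step : ∀ s ∈ Set.uIcc (0:ℝ) t,
        (t - s) ^ (α - 1) *
            ((lam * s + lam ^ 2 * s * t) * (t - s) ^ α / α
              + (-(lam ^ 2 * s)) * (t - s) ^ (α + 1) / (α + 1)
              + 0 * (t - s) ^ (α + 2) / (α + 2))
          = (fun u : ℝ => u ^ (α - 1) *
              ((lam * (t - u) + lam ^ 2 * (t - u) * t) * u ^ α / α
                + (-(lam ^ 2 * (t - u))) * u ^ (α + 1) / (α + 1)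
                + 0 * u ^ (α + 2) / (α + 2))) (t - s) := by
      intro s _
      simp only
      rw [show t - (t - s) = s by ring]
    rw [intervalIntegral.integral_congr step]
    rw [intervalIntegral.integral_comp_sub_left
      (fun u : ℝ => u ^ (α - 1) *
        ((lam * (t - u) + lam ^ 2 * (t - u) * t) * u ^ α / α
          + (-(lam ^ 2 * (t - u))) * u ^ (α + 1) / (α + 1)
          + 0 * u ^ (α + 2) / (α + 2))) t]
    rw [sub_self, sub_zero]
    have hae : ∀ᵐ u : ℝ, u ∈ Set.uIoc (0:ℝ) t →
        u ^ (α - 1) *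
            ((lam * (t - u) + lam ^ 2 * (t - u) * t) * u ^ α / α
              + (-(lam ^ 2 * (t - u))) * u ^ (α + 1) / (α + 1)
              + 0 * u ^ (α + 2) / (α + 2))
          = (t * (lam + lam ^ 2 * t) / α) * u ^ (2*α - 1)
              + (-((lam + lam ^ 2 * t) / α) - lam ^ 2 * t / (α + 1)) * u ^ (2*α)
              + (lam ^ 2 / (α + 1)) * u ^ (2*α+1) := by
      refine Filter.Eventually.of_forall (fun u hu => ?_)
      rw [Set.uIoc_of_le ht.le] at hu
      have h0 : 0 < u := hu.1
      have e1 : u ^ (α - 1) * u ^ α = u ^ (2*α - 1) := by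
        rw [← Real.rpow_add h0]; ring_nf
      have e2 : u ^ (α - 1) * u ^ (α + 1) = u ^ (2*α) := by
        rw [← Real.rpow_add h0]; ring_nf
      have e3 : u ^ (2*α) * u = u ^ (2*α + 1) := by
        rw [← Real.rpow_add_one h0.ne' (2*α)]
      have e4 : u ^ (2*α - 1) * u = u ^ (2*α) := by
        rw [← Real.rpow_add_one h0.ne' (2*α - 1)]; ring_nf
      linear_combination ((lam + lam^2*t)*(t-u)/α) * e1
        + (-(lam^2*(t-u))/(α+1)) * e2
        + (lam^2/(α+1)) * e3
        + (-((lam + lam^2*t)/α)) * e4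
    rw [intervalIntegral.integral_congr_ae hae]
    have := L_aux (2*α) t (t * (lam + lam ^ 2 * t) / α)
      (-((lam + lam ^ 2 * t) / α) - lam ^ 2 * t / (α + 1)) (lam ^ 2 / (α + 1))
      (by linarith)
    exact this
  -- step 3: algebra
  have hΓ : 0 < Real.Gamma α := Real.Gamma_pos_of_pos hα
  have hΓ1 : Real.Gamma (α + 1) = α * Real.Gamma α := Real.Gamma_add_one hα.ne'
  have hΓ2 : Real.Gamma (α + 2) = (α + 1) * (α * Real.Gamma α) := by
    rw [show α + 2 = (α + 1) + 1 by ring, Real.Gamma_add_one (by linarith), hΓ1]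
  have ht1 : t ^ (2*α + 1) = t ^ (2*α) * t := by
    rw [Real.rpow_add_one ht.ne' (2*α)]
  have ht2 : t ^ (2*α + 2) = t ^ (2*α) * t * t := by
    rw [show 2*α + 2 = (2*α + 1) + 1 by ring, Real.rpow_add_one ht.ne', ht1]
  have ht3 : (t ^ (α + 1)) ^ 2 = t ^ (2*α) * t * t := by
    rw [← Real.rpow_natCast (t ^ (α + 1)) 2, ← Real.rpow_mul ht.le]
    push_cast
    rw [show (α + 1) * 2 = (2*α + 1) + 1 by ring, Real.rpow_add_one ht.ne', ht1]
  constructor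
  · rw [houter, hΓ1, hΓ2, ht1, ht2]
    field_simp
    ring
  · rw [houter, hΓ2, hΓ1, ht1, ht2]
    rw [div_pow, mul_pow, ht3]
    field_simp
    ring
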